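/- Let A_IRS ∈ ℂ^{M×U} have full Kruskal rank min(M,U), and let V ∈ ℂ^{M×Q} have i.i.d. entries drawn uniformly from the complex unit circle. Then with probability 1, rank(VᵀA_IRS) = min(Q, U) provided M ≥ min(Q,U); in particular if Q ≥ U and the columns of A_IRS are linearly independent, VᵀA_IRS has full column rank U almost surely. -/

import Mathlib

open Matrix MeasureTheory

/-- The Kruskal rank of a matrix: the largest `k` (with `k ≤ n`) such that every
subset of `k` columns is linearly independent. -/
noncomputable def kruskalRank {m n : ℕ} (A : Matrix (Fin m) (Fin n) ℂ) : ℕ :=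
  sSup {k | k ≤ n ∧ ∀ s : Finset (Fin n), s.card = k →
    LinearIndependent ℂ (fun i : s => fun p => A p (i : Fin n))}

/-- The uniform probability measure on `[0, 2π]` (for the random phases). -/
noncomputable def phaseMeasure : Measure ℝ :=
  ((2 * Real.pi).toNNReal)⁻¹ • volume.restrict (Set.Icc 0 (2 * Real.pi))

instance : SigmaFinite phaseMeasure := by
  unfold phaseMeasure; infer_instance

/-! ### Auxiliary measure-theoretic lemmas -/

lemma phaseMeasure_countable_null {s : Set ℝ} (hs : s.Countable) : phaseMeasure s = 0 := by
  have h1 : (volume.restrict (Set.Icc 0 (2 * Real.pi))) s = 0 := by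
    have := Measure.restrict_le_self (μ := volume) (s := Set.Icc 0 (2 * Real.pi))
    exact le_antisymm (le_trans (this s) (le_of_eq (hs.measure_zero _))) zero_le
  simp [phaseMeasure, Measure.smul_apply, h1]

lemma exp_level_countable (c : ℂ) : Set.Countable {t : ℝ | Complex.exp (Complex.I * t) = c} := by
  rcases Set.eq_empty_or_nonempty {t : ℝ | Complex.exp (Complex.I * t) = c} with h | ⟨t0, ht0⟩
  · rw [h]; exact Set.countable_empty
  · have hsub : {t : ℝ | Complex.exp (Complex.I * t) = c} ⊆
        Set.range (fun n : ℤ => t0 + n * (2 * Real.pi)) := by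
      intro t ht
      have h2 : Complex.exp (Complex.I * t) = Complex.exp (Complex.I * t0) := by
        rw [ht, ht0]
      rw [Complex.exp_eq_exp_iff_exists_int] at h2
      obtain ⟨n, hn⟩ := h2
      refine ⟨n, ?_⟩
      have h3 : (t : ℂ) = t0 + n * (2 * Real.pi) := by
        have hI : Complex.I ≠ 0 := Complex.I_ne_zero
        apply mul_left_cancel₀ hI
        rw [hn]; ring
      have := congrArg Complex.re h3
      simpa using this.symm
    exact (Set.countable_range _).mono hsub

lemma poly_circle_ae (p : Polynomial ℂ) (hp : p ≠ 0) :
    ∀ᵐ t : ℝ ∂phaseMeasure, Polynomial.eval (Complex.exp (Complex.I * (t : ℂ))) p ≠ 0 := by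
  rw [ae_iff]
  apply le_antisymm _ zero_le
  calc phaseMeasure {t : ℝ | ¬ Polynomial.eval (Complex.exp (Complex.I * (t : ℂ))) p ≠ 0}
      ≤ phaseMeasure (⋃ c ∈ p.roots.toFinset, {t : ℝ | Complex.exp (Complex.I * t) = c}) := by
        apply measure_mono
        intro t ht
        simp only [Set.mem_setOf_eq, not_not] at ht
        simp only [Set.mem_iUnion, Set.mem_setOf_eq]
        exact ⟨Complex.exp (Complex.I * t), by
          simp [Multiset.mem_toFinset, Polynomial.mem_roots, hp, ht], rfl⟩
    _ = 0 := by
        apply le_antisymm _ zero_le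
        apply le_of_eq
        apply phaseMeasure_countable_null
        exact Set.Countable.biUnion (p.roots.toFinset : Finset ℂ).countable_toSet
          (fun c _ => exp_level_countable c)

/-- Key lemma: a multivariate polynomial which does not vanish at some point of the torus
is a.e. nonvanishing on the torus. -/
lemma torus_mvpoly_ae : ∀ (n : ℕ) (P : MvPolynomial (Fin n) ℂ) (γ₀ : Fin n → ℝ),
    MvPolynomial.eval (fun i => Complex.exp (Complex.I * (γ₀ i : ℂ))) P ≠ 0 →
    ∀ᵐ γ ∂(Measure.pi fun _ : Fin n => phaseMeasure),
      MvPolynomial.eval (fun i => Complex.exp (Complex.I * (γ i : ℂ))) P ≠ 0 := by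
  intro n
  induction n with
  | zero =>
    intro P γ₀ h0
    refine Filter.Eventually.of_forall (fun γ => ?_)
    rwa [Subsingleton.elim γ γ₀]
  | succ n ih =>
    intro P γ₀ h0
    set q : (Fin n → ℝ) → Polynomial ℂ := fun γ' =>
      Polynomial.map (MvPolynomial.eval (fun i => Complex.exp (Complex.I * (γ' i : ℂ))))
        (MvPolynomial.finSuccEquiv ℂ n P) with hq
    have key : ∀ (t : ℝ) (γ' : Fin n → ℝ),
        MvPolynomial.eval
            (fun i => Complex.exp (Complex.I * ((Fin.cons t γ' : Fin (n+1) → ℝ) i : ℂ))) P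
          = (q γ').eval (Complex.exp (Complex.I * (t : ℂ))) := by
      intro t γ'
      have hcons : (fun i => Complex.exp (Complex.I * ((Fin.cons t γ' : Fin (n+1) → ℝ) i : ℂ)))
          = Fin.cons (Complex.exp (Complex.I * (t : ℂ)))
              (fun i => Complex.exp (Complex.I * (γ' i : ℂ))) := by
        funext i
        refine Fin.cases ?_ (fun j => ?_) i <;> simp
      rw [hcons, MvPolynomial.eval_eq_eval_mv_eval']
    -- nonvanishing at the base point
    have hq0 : q (Fin.tail γ₀) ≠ 0 := by
      intro hqz
      apply h0
      have := key (γ₀ 0) (Fin.tail γ₀)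
      rw [Fin.cons_self_tail] at this
      rw [this, hqz, Polynomial.eval_zero]
    obtain ⟨k, hk0⟩ := Polynomial.support_nonempty.mpr hq0
    have hk := Polynomial.mem_support_iff.mp hk0
    rw [hq, Polynomial.coeff_map] at hk
    have hae' := ih ((MvPolynomial.finSuccEquiv ℂ n P).coeff k) (Fin.tail γ₀) hk
    -- a.e. γ', the polynomial q γ' is nonzero
    have haeq : ∀ᵐ γ' ∂(Measure.pi fun _ : Fin n => phaseMeasure), q γ' ≠ 0 := by
      filter_upwards [hae'] with γ' hγ'
      intro hz
      apply hγ'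
      have := congrArg (fun p => Polynomial.coeff p k) hz
      simpa [hq, Polynomial.coeff_map] using this
    -- a.e. γ', a.e. t, eval ≠ 0
    have haeqt : ∀ᵐ γ' ∂(Measure.pi fun _ : Fin n => phaseMeasure),
        phaseMeasure {t : ℝ | (q γ').eval (Complex.exp (Complex.I * (t : ℂ))) = 0} = 0 := by
      filter_upwards [haeq] with γ' hγ'
      have := (ae_iff.mp (poly_circle_ae (q γ') hγ'))
      simpa using this
    -- measurability
    have hcont : Continuous (fun p : ℝ × (Fin n → ℝ) =>
        MvPolynomial.eval
          (fun i => Complex.exp (Complex.I * ((Fin.cons p.1 p.2 : Fin (n+1) → ℝ) i : ℂ))) P) := by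
      apply (MvPolynomial.continuous_eval P).comp
      refine continuous_pi (fun i => ?_)
      refine Fin.cases ?_ (fun j => ?_) i
      · simp only [Fin.cons_zero]
        exact Complex.continuous_exp.comp (continuous_const.mul
          (Complex.continuous_ofReal.comp continuous_fst))
      · simp only [Fin.cons_succ]
        exact Complex.continuous_exp.comp (continuous_const.mul
          (Complex.continuous_ofReal.comp ((continuous_apply j).comp continuous_snd)))
    set E : Set (ℝ × (Fin n → ℝ)) :=
      {p | (q p.2).eval (Complex.exp (Complex.I * (p.1 : ℂ))) = 0} with hE
    have hEm : MeasurableSet E := by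
      have : E = (fun p : ℝ × (Fin n → ℝ) =>
          MvPolynomial.eval
            (fun i => Complex.exp (Complex.I * ((Fin.cons p.1 p.2 : Fin (n+1) → ℝ) i : ℂ))) P)
            ⁻¹' {0} := by
        ext p; simp [hE, key p.1 p.2]
      rw [this]
      exact hcont.measurable (measurableSet_singleton 0)
    -- product measure of E is zero
    have hEnull : (phaseMeasure.prod (Measure.pi fun _ : Fin n => phaseMeasure)) E = 0 := by
      have hswap : ((Measure.pi fun _ : Fin n => phaseMeasure).prod phaseMeasure)
          (Prod.swap ⁻¹' E) = 0 := by
        rw [Measure.measure_prod_null (measurable_swap hEm)]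
        filter_upwards [haeqt] with γ' hγ'
        simpa [hE, Set.preimage] using hγ'
      have heq := (Measure.measurePreserving_swap
        (μ := (Measure.pi fun _ : Fin n => phaseMeasure)) (ν := phaseMeasure)).measure_preimage
        (s := E) hEm.nullMeasurableSet
      rw [heq] at hswap
      exact hswap
    -- transfer to the pi measure on Fin (n+1)
    rw [ae_iff]
    have hg := measurePreserving_piFinSuccAbove (fun _ : Fin (n+1) => phaseMeasure) 0
    have hpre : {γ : Fin (n+1) → ℝ |
        ¬ MvPolynomial.eval (fun i => Complex.exp (Complex.I * (γ i : ℂ))) P ≠ 0}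
        = (MeasurableEquiv.piFinSuccAbove (fun _ : Fin (n+1) => ℝ) 0) ⁻¹' E := by
      ext γ
      have hk2 := key (γ 0) (Fin.tail γ)
      rw [Fin.cons_self_tail] at hk2
      simp only [Set.mem_setOf_eq, not_not, Set.mem_preimage,
        MeasurableEquiv.piFinSuccAbove_apply, hE, Fin.insertNthEquiv, Fin.removeNth_zero]
      rw [hk2]
      exact Iff.rfl
    rw [hpre, hg.measure_preimage hEm.nullMeasurableSet]
    exact hEnull

/-- Version of the key lemma for variables indexed by `Fin M × Fin Q`. -/
lemma torus_mvpoly_ae_prod {M Q : ℕ} (P : MvPolynomial (Fin M × Fin Q) ℂ)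
    (γ₀ : Fin M × Fin Q → ℝ)
    (h : MvPolynomial.eval (fun p => Complex.exp (Complex.I * (γ₀ p : ℂ))) P ≠ 0)
    (hcont : Continuous (fun γ : (Fin M × Fin Q) → ℝ =>
      MvPolynomial.eval (fun p => Complex.exp (Complex.I * (γ p : ℂ))) P)) :
    ∀ᵐ γ ∂(Measure.pi fun _ : Fin M × Fin Q => phaseMeasure),
      MvPolynomial.eval (fun p => Complex.exp (Complex.I * (γ p : ℂ))) P ≠ 0 := by
  set f : Fin (M * Q) ≃ Fin M × Fin Q := finProdFinEquiv.symm with hf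
  have hmp := measurePreserving_piCongrLeft (fun _ : Fin M × Fin Q => phaseMeasure) f
  set g := MeasurableEquiv.piCongrLeft (fun _ : Fin M × Fin Q => ℝ) f with hg
  have hgapp : ∀ (δ : Fin (M * Q) → ℝ) (p : Fin M × Fin Q), g δ p = δ (f.symm p) := by
    intro δ p
    have : p = f (f.symm p) := (f.apply_symm_apply p).symm
    rw [hg, MeasurableEquiv.coe_piCongrLeft]
    conv_lhs => rw [this]
    exact Equiv.piCongrLeft_apply_apply (fun _ => ℝ) f δ (f.symm p)
  set P' : MvPolynomial (Fin (M * Q)) ℂ := MvPolynomial.rename f.symm P with hP'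
  have hev : ∀ δ : Fin (M * Q) → ℝ,
      MvPolynomial.eval (fun j => Complex.exp (Complex.I * (δ j : ℂ))) P'
        = MvPolynomial.eval (fun p => Complex.exp (Complex.I * ((g δ) p : ℂ))) P := by
    intro δ
    rw [hP', MvPolynomial.eval_rename]
    have hfun : ((fun j => Complex.exp (Complex.I * (δ j : ℂ))) ∘ ⇑f.symm)
        = fun p => Complex.exp (Complex.I * ((g δ p : ℝ) : ℂ)) := by
      funext p
      simp only [Function.comp_apply, hgapp δ p]
    rw [hfun]
  set S : Set ((Fin M × Fin Q) → ℝ) :=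
    {γ | MvPolynomial.eval (fun p => Complex.exp (Complex.I * (γ p : ℂ))) P = 0} with hS
  have hSm : MeasurableSet S := hcont.measurable (measurableSet_singleton 0)
  rw [ae_iff]
  have hpre : {γ | ¬ MvPolynomial.eval (fun p => Complex.exp (Complex.I * (γ p : ℂ))) P ≠ 0} = S := by
    ext γ; simp [hS]
  rw [hpre, ← hmp.measure_preimage hSm.nullMeasurableSet]
  have h0' : MvPolynomial.eval (fun j : Fin (M*Q) => Complex.exp (Complex.I * ((γ₀ (f j) : ℝ) : ℂ))) P' ≠ 0 := by
    rw [hP', MvPolynomial.eval_rename]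
    have hfun : ((fun j : Fin (M*Q) => Complex.exp (Complex.I * ((γ₀ (f j) : ℝ) : ℂ))) ∘ ⇑f.symm)
        = fun p => Complex.exp (Complex.I * ((γ₀ p : ℝ) : ℂ)) := by
      funext p
      simp
    rw [hfun]
    exact h
  have hae := torus_mvpoly_ae (M * Q) P' (fun j => γ₀ (f j)) h0'
  rw [ae_iff] at hae
  apply le_antisymm _ zero_le
  calc (Measure.pi fun _ : Fin (M*Q) => phaseMeasure) (⇑g ⁻¹' S)
      ≤ (Measure.pi fun _ : Fin (M*Q) => phaseMeasure)
        {δ | ¬ MvPolynomial.eval (fun j => Complex.exp (Complex.I * (δ j : ℂ))) P' ≠ 0} := by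
        apply measure_mono
        intro δ hδ
        simp only [Set.mem_preimage, hS, Set.mem_setOf_eq] at hδ
        simp only [Set.mem_setOf_eq, not_not]
        rw [hev δ]
        exact hδ
    _ = 0 := hae

/-! ### Auxiliary linear algebra lemmas -/

lemma exists_rows_linearIndependent {m r : ℕ} (B : Matrix (Fin m) (Fin r) ℂ)
    (hB : B.rank = r) : ∃ f : Fin r → Fin m, LinearIndependent ℂ (fun j => B (f j)) := by
  classical
  have hspan : Submodule.span ℂ (Set.range B) = ⊤ := by
    apply Submodule.eq_top_of_finrank_eq
    rw [show Set.range B = Set.range B.row from rfl, ← Matrix.rank_eq_finrank_span_row, hB, Module.finrank_fintype_fun_eq_card,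
      Fintype.card_fin]
  obtain ⟨b, hbsub, hbspan, hbli⟩ := exists_linearIndependent ℂ (Set.range B)
  rw [hspan] at hbspan
  have hbfin : b.Finite := (Set.finite_range B).subset hbsub
  haveI : Fintype b := hbfin.fintype
  let bas : Module.Basis b ℂ (Fin r → ℂ) := Module.Basis.mk hbli (by rw [Subtype.range_coe, hbspan])
  have hcard : Fintype.card b = r := by
    have := Module.finrank_eq_card_basis bas
    rw [Module.finrank_fintype_fun_eq_card, Fintype.card_fin] at this
    exact this.symm
  let e : Fin r ≃ b := (Fintype.equivFinOfCardEq hcard).symm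
  have hchoice : ∀ j : Fin r, ∃ i : Fin m, B i = (e j : Fin r → ℂ) := fun j => hbsub (e j).2
  choose f hfspec using hchoice
  refine ⟨f, ?_⟩
  have : (fun j => B (f j)) = (Subtype.val : b → (Fin r → ℂ)) ∘ e := by
    funext j; rw [hfspec j]; rfl
  rw [this]
  exact hbli.comp e e.injective

/-- With `V` having i.i.d. entries uniform on the complex unit circle and `A_IRS` of
full Kruskal rank `min M U` with `M ≥ min Q U`, the matrix `Vᵀ A_IRS` has rank
`min Q U` almost surely. -/
theorem rank_Vt_mul_steering_ae {M Q U : ℕ}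
    (A : Matrix (Fin M) (Fin U) ℂ)
    (hk : kruskalRank A = min M U) (hM : M ≥ min Q U) :
    ∀ᵐ γ ∂(Measure.pi fun _ : Fin M × Fin Q => phaseMeasure),
      ((Matrix.of fun i q => Complex.exp (Complex.I * (γ (i, q) : ℂ)) :
          Matrix (Fin M) (Fin Q) ℂ)ᵀ * A).rank = min Q U := by
  classical
  have hrU : min Q U ≤ U := min_le_right _ _
  have hrQ : min Q U ≤ Q := min_le_left _ _
  have hrMU : min Q U ≤ min M U := le_min hM hrU
  -- Kruskal rank gives independence of every `min M U` columns
  have hmem : min M U ≤ U ∧ ∀ s : Finset (Fin U), s.card = min M U →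
      LinearIndependent ℂ (fun i : s => fun p => A p (i : Fin U)) := by
    have h := Nat.sSup_mem
      (s := {k | k ≤ U ∧ ∀ s : Finset (Fin U), s.card = k →
        LinearIndependent ℂ (fun i : s => fun p => A p (i : Fin U))})
      ⟨0, Nat.zero_le _, by
        intro s hs
        have hse := Finset.card_eq_zero.mp hs
        subst hse
        exact linearIndependent_empty_type⟩
      ⟨U, fun x hx => hx.1⟩
    rwa [show sSup _ = kruskalRank A from rfl, hk] at h
  -- the first `min Q U` columns of `A` are linearly independent
  have hsubind : LinearIndependent ℂ
      (fun j : Fin (min Q U) => (fun p => A p (Fin.castLE hrU j))) := by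
    set s₀ : Finset (Fin U) := Finset.image (Fin.castLE hrU) Finset.univ with hs₀
    have hs₀card : s₀.card = min Q U := by
      rw [hs₀, Finset.card_image_of_injective _ (Fin.castLE_injective hrU),
        Finset.card_univ, Fintype.card_fin]
    obtain ⟨s, hs₀s, _, hscard⟩ := Finset.exists_subsuperset_card_eq (n := min M U)
      (Finset.subset_univ s₀) (by rw [hs₀card]; exact hrMU)
      (by rw [Finset.card_univ, Fintype.card_fin]; exact min_le_right M U)
    have hind := hmem.2 s hscard
    have hincl : ∀ j : Fin (min Q U), Fin.castLE hrU j ∈ s := fun j => hs₀s (by simp [hs₀])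
    let g : Fin (min Q U) → {x // x ∈ s} := fun j => ⟨Fin.castLE hrU j, hincl j⟩
    have hginj : Function.Injective g := by
      intro a b hab
      have h1 := congrArg Subtype.val hab
      exact Fin.castLE_injective hrU h1
    exact hind.comp g hginj
  -- the `M × min Q U` matrix of the first columns
  set A' : Matrix (Fin M) (Fin (min Q U)) ℂ :=
    Matrix.of fun i j => A i (Fin.castLE hrU j) with hA'
  have hA'rank : A'.rank = min Q U := by
    have h1 : LinearIndependent ℂ (fun j : Fin (min Q U) => A'ᵀ j) := hsubind
    calc A'.rank = A'ᵀ.rank := (Matrix.rank_transpose A').symm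
    _ = min Q U := by rw [LinearIndependent.rank_matrix (M := A'ᵀ) h1, Fintype.card_fin]
  -- the Vandermonde torus matrix
  set x : Fin M → ℂ := fun v =>
    Complex.exp (Complex.I * ((2 * Real.pi * v / M : ℝ) : ℂ)) with hx
  have hxinj : Function.Injective x := by
    intro a b hab
    have hMpos : (0:ℝ) < M := by exact_mod_cast a.pos
    have hpi : (0:ℝ) < 2 * Real.pi := by positivity
    rw [hx] at hab
    simp only at hab
    rw [Complex.exp_eq_exp_iff_exists_int] at hab
    obtain ⟨n, hn⟩ := hab
    have hre : (2 * Real.pi * a / M : ℝ) = 2 * Real.pi * b / M + n * (2 * Real.pi) := by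
      have h3 : ((2 * Real.pi * a / M : ℝ) : ℂ)
          = ((2 * Real.pi * b / M + n * (2 * Real.pi) : ℝ) : ℂ) := by
        apply mul_left_cancel₀ Complex.I_ne_zero
        rw [hn]; push_cast; ring
      exact_mod_cast h3
    have hab' : (a:ℝ) = b + n * M := by
      have h4 : 2 * Real.pi * (a:ℝ) = 2 * Real.pi * ((b:ℝ) + n * M) := by
        field_simp at hre
        nlinarith [hre]
      have := mul_left_cancel₀ (ne_of_gt hpi) h4
      linarith
    have hn0 : n = 0 := by
      by_contra hne
      have h5 : (1:ℝ) ≤ |(n:ℝ)| := by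
        exact_mod_cast Int.one_le_abs (by exact_mod_cast hne)
      have haM : (a:ℝ) < M := by exact_mod_cast a.isLt
      have hbM : (b:ℝ) < M := by exact_mod_cast b.isLt
      have ha0 : (0:ℝ) ≤ a := by positivity
      have hb0 : (0:ℝ) ≤ b := by positivity
      have h7 : (n:ℝ) * M = a - b := by linarith
      have h8 : |(a:ℝ) - b| < M := abs_sub_lt_iff.mpr ⟨by linarith, by linarith⟩
      have h9 : |(n:ℝ) * M| = |(n:ℝ)| * M := by
        rw [abs_mul, abs_of_pos hMpos]
      have h10 : M ≤ |(n:ℝ)| * M := le_mul_of_one_le_left hMpos.le h5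
      rw [h7] at h9
      linarith [h8, h9, h10]
    rw [hn0] at hab'
    simp at hab'
    exact Fin.ext (by exact_mod_cast hab')
  have hFdet : (Matrix.vandermonde x).det ≠ 0 := by
    rw [Matrix.det_vandermonde]
    refine Finset.prod_ne_zero_iff.mpr (fun i _ => ?_)
    refine Finset.prod_ne_zero_iff.mpr (fun j hj => ?_)
    refine sub_ne_zero.mpr (fun hcon => ?_)
    have := hxinj hcon
    rw [Finset.mem_Ioi] at hj
    exact absurd this (ne_of_gt hj)
  have hBrank : (Matrix.vandermonde x * A').rank = min Q U := by
    rw [Matrix.rank_mul_eq_right_of_isUnit_det _ _ (isUnit_iff_ne_zero.mpr hFdet), hA'rank]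
  obtain ⟨fsel, hfsel⟩ := exists_rows_linearIndependent (Matrix.vandermonde x * A') hBrank
  -- the witness phase point
  set f' : Fin Q → ℕ := fun qq => if h : (qq : ℕ) < min Q U then (fsel ⟨qq, h⟩ : ℕ) else 0 with hf'
  set γ₀ : Fin M × Fin Q → ℝ := fun pr => 2 * Real.pi * (f' pr.2) * pr.1 / M with hγ₀
  have hexp : ∀ (i : Fin M) (j : Fin (min Q U)),
      Complex.exp (Complex.I * (γ₀ (i, Fin.castLE hrQ j) : ℂ)) = x (fsel j) ^ (i : ℕ) := by
    intro i j
    have hcast : f' (Fin.castLE hrQ j) = (fsel j : ℕ) := by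
      rw [hf']
      simp only
      rw [dif_pos (show ((Fin.castLE hrQ j : Fin Q) : ℕ) < min Q U from j.isLt)]
      congr 1
    rw [hγ₀]
    simp only
    rw [hcast, hx]
    simp only
    rw [← Complex.exp_nat_mul]
    congr 1
    push_cast
    ring
  -- the determinant polynomial
  set W : Matrix (Fin M) (Fin Q) (MvPolynomial (Fin M × Fin Q) ℂ) :=
    Matrix.of fun i qq => MvPolynomial.X (i, qq) with hW
  set P : MvPolynomial (Fin M × Fin Q) ℂ :=
    ((Wᵀ * (A.map MvPolynomial.C : Matrix (Fin M) (Fin U) (MvPolynomial (Fin M × Fin Q) ℂ))).submatrix (Fin.castLE hrQ) (Fin.castLE hrU)).det with hP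
  have heval : ∀ γ : Fin M × Fin Q → ℝ,
      MvPolynomial.eval (fun p => Complex.exp (Complex.I * (γ p : ℂ))) P
        = ((((Matrix.of fun i q => Complex.exp (Complex.I * (γ (i, q) : ℂ))) :
            Matrix (Fin M) (Fin Q) ℂ)ᵀ * A).submatrix
            (Fin.castLE hrQ) (Fin.castLE hrU)).det := by
    intro γ
    rw [hP, RingHom.map_det]
    congr 1
    ext j u
    simp only [RingHom.mapMatrix_apply, Matrix.map_apply, Matrix.submatrix_apply,
      Matrix.mul_apply, Matrix.transpose_apply, Matrix.of_apply]
    rw [map_sum]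
    apply Finset.sum_congr rfl
    intro i _
    rw [_root_.map_mul, MvPolynomial.eval_C, hW]
    simp [MvPolynomial.eval_X]
  have hP0 : MvPolynomial.eval (fun p => Complex.exp (Complex.I * (γ₀ p : ℂ))) P ≠ 0 := by
    rw [heval γ₀]
    have hmat : ((((Matrix.of fun i q => Complex.exp (Complex.I * (γ₀ (i, q) : ℂ))) :
        Matrix (Fin M) (Fin Q) ℂ)ᵀ * A).submatrix (Fin.castLE hrQ) (Fin.castLE hrU))
        = (Matrix.vandermonde x * A').submatrix fsel id := by
      ext j u
      simp only [Matrix.submatrix_apply, Matrix.mul_apply, Matrix.transpose_apply,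
        Matrix.of_apply, id_eq]
      apply Finset.sum_congr rfl
      intro i _
      rw [hexp i j]
      rfl
    rw [hmat]
    have hunit : IsUnit ((Matrix.vandermonde x * A').submatrix fsel id) := by
      rw [← Matrix.linearIndependent_rows_iff_isUnit]
      exact hfsel
    exact isUnit_iff_ne_zero.mp ((Matrix.isUnit_iff_isUnit_det _).mp hunit)
  have hcontP : Continuous (fun γ : (Fin M × Fin Q) → ℝ =>
      MvPolynomial.eval (fun p => Complex.exp (Complex.I * (γ p : ℂ))) P) := by
    apply (MvPolynomial.continuous_eval P).comp
    refine continuous_pi (fun p => ?_)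
    exact Complex.continuous_exp.comp (continuous_const.mul
      (Complex.continuous_ofReal.comp (continuous_apply p)))
  have hae := torus_mvpoly_ae_prod P γ₀ hP0 hcontP
  filter_upwards [hae] with γ hγ
  rw [heval γ] at hγ
  set Cm : Matrix (Fin Q) (Fin U) ℂ :=
    ((Matrix.of fun i q => Complex.exp (Complex.I * (γ (i, q) : ℂ))) :
      Matrix (Fin M) (Fin Q) ℂ)ᵀ * A with hCm
  have hle : Cm.rank ≤ min Q U := le_min (Matrix.rank_le_height Cm) (Matrix.rank_le_width Cm)
  have hD : IsUnit (Cm.submatrix (Fin.castLE hrQ) (Fin.castLE hrU)) :=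
    (Matrix.isUnit_iff_isUnit_det _).mpr (isUnit_iff_ne_zero.mpr hγ)
  have hcols : LinearIndependent ℂ
      (fun j => (Cm.submatrix (Fin.castLE hrQ) (Fin.castLE hrU))ᵀ j) :=
    Matrix.linearIndependent_cols_iff_isUnit.mpr hD
  have hw : LinearIndependent ℂ (fun j : Fin (min Q U) => Cmᵀ (Fin.castLE hrU j)) := by
    apply LinearIndependent.of_comp (LinearMap.funLeft ℂ ℂ (Fin.castLE hrQ))
    exact hcols
  have hge : min Q U ≤ Cm.rank := by
    rw [Matrix.rank_eq_finrank_span_cols]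
    have hcard := linearIndependent_iff_card_eq_finrank_span.mp hw
    rw [Fintype.card_fin] at hcard
    rw [hcard, Set.finrank]
    apply Submodule.finrank_mono
    apply Submodule.span_mono
    rintro _ ⟨j, rfl⟩
    exact ⟨Fin.castLE hrU j, rfl⟩
  exact le_antisymm hle hge
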